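/- For n ≥ 1, let x^k_1 ≤ x^k_2 be reals for k = 1,…,n, with x^1_1 ≤ x^k_1 for all k. Define t_{i1…in} = min_k x^k_{ik} for each index vector (i1,…,in) ∈ {1,2}^n, and the n-th order interaction contrast c(t) = Σ_{(i1,…,in)} (−1)^{n + i1 + … + in} h(t − t_{i1…in}), where h is the Heaviside function. Then c(t) ≤ 0 for all t if n is even, and c(t) ≥ 0 for all t if n is odd. -/

import Mathlib

noncomputable def heaviside (x : ℝ) : ℝ := if 0 ≤ x then 1 else 0

lemma heaviside_mono : Monotone heaviside := by
  intro a b hab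
  unfold heaviside
  split_ifs with h1 h2 <;> try norm_num
  exact absurd (h1.trans hab) h2

lemma heaviside_nonneg (x : ℝ) : 0 ≤ heaviside x := by
  unfold heaviside; split_ifs <;> norm_num

lemma heaviside_le_one (x : ℝ) : heaviside x ≤ 1 := by
  unfold heaviside; split_ifs <;> norm_num

lemma heaviside_min {n : ℕ} (hne : (Finset.univ : Finset (Fin n)).Nonempty)
    (t : ℝ) (f : Fin n → ℝ) :
    heaviside (t - Finset.univ.inf' hne f) =
      1 - ∏ k, (1 - heaviside (t - f k)) := by
  by_cases h : ∃ k, f k ≤ t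
  · obtain ⟨k, hk⟩ := h
    have h1 : heaviside (t - Finset.univ.inf' hne f) = 1 := by
      unfold heaviside
      rw [if_pos]
      have := Finset.inf'_le (b := k) f (Finset.mem_univ k)
      linarith
    have h2 : (1 - heaviside (t - f k)) = 0 := by
      unfold heaviside
      rw [if_pos (by linarith)]; ring
    rw [h1, Finset.prod_eq_zero (Finset.mem_univ k) h2]; ring
  · push_neg at h
    have h1 : heaviside (t - Finset.univ.inf' hne f) = 0 := by
      unfold heaviside
      rw [if_neg]
      have := (Finset.lt_inf'_iff hne (a := t) (f := f)).2
        (fun b _ => h b)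
      linarith
    have h2 : ∀ k ∈ Finset.univ, (1 - heaviside (t - f k)) = (1 : ℝ) := by
      intro k _
      unfold heaviside
      rw [if_neg (by have := h k; linarith)]; ring
    rw [h1, Finset.prod_congr rfl h2, Finset.prod_const_one]; ring

theorem stmt13 (n : ℕ) (hn : 0 < n) (x : Fin n → Fin 2 → ℝ)
    (hx : ∀ k, x k 0 ≤ x k 1)
    (hfirst : ∀ k, x ⟨0, hn⟩ 0 ≤ x k 0)
    (c : ℝ → ℝ)
    (hc : ∀ t, c t = ∑ i : Fin n → Fin 2,
      (-1 : ℝ) ^ (n + ∑ k, ((i k : ℕ) + 1)) *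
        heaviside (t - Finset.univ.inf' (Finset.univ_nonempty_iff.mpr ⟨⟨0, hn⟩⟩)
          (fun k => x k (i k)))) :
    (Even n → ∀ t, c t ≤ 0) ∧ (Odd n → ∀ t, 0 ≤ c t) := by
  have key : ∀ t, c t = -((-1 : ℝ) ^ n *
      ∏ k, (heaviside (t - x k 0) - heaviside (t - x k 1))) := by
    intro t
    rw [hc t]
    have hsign : ∀ i : Fin n → Fin 2,
        (-1 : ℝ) ^ (n + ∑ k, ((i k : ℕ) + 1)) = ∏ k, (-1 : ℝ) ^ (i k : ℕ) := by
      intro i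
      have he : n + ∑ k, ((i k : ℕ) + 1) = 2 * n + ∑ k, (i k : ℕ) := by
        rw [Finset.sum_add_distrib, Finset.sum_const, Finset.card_univ,
          Fintype.card_fin]
        ring
      rw [he, pow_add, pow_mul, Finset.prod_pow_eq_pow_sum]
      norm_num
    calc ∑ i : Fin n → Fin 2,
        (-1 : ℝ) ^ (n + ∑ k, ((i k : ℕ) + 1)) *
          heaviside (t - Finset.univ.inf' (Finset.univ_nonempty_iff.mpr ⟨⟨0, hn⟩⟩)
            (fun k => x k (i k)))
        = ∑ i : Fin n → Fin 2,
            ((∏ k, (-1 : ℝ) ^ (i k : ℕ)) -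
              ∏ k, ((-1 : ℝ) ^ (i k : ℕ) * (1 - heaviside (t - x k (i k))))) := by
          refine Finset.sum_congr rfl fun i _ => ?_
          rw [hsign i, heaviside_min, Finset.prod_mul_distrib]
          ring
      _ = (∑ i : Fin n → Fin 2, ∏ k, (-1 : ℝ) ^ (i k : ℕ)) -
            ∑ i : Fin n → Fin 2,
              ∏ k, ((-1 : ℝ) ^ (i k : ℕ) * (1 - heaviside (t - x k (i k)))) :=
          Finset.sum_sub_distrib _ _
      _ = (∏ k : Fin n, ∑ j : Fin 2, (-1 : ℝ) ^ (j : ℕ)) -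
            ∏ k : Fin n, ∑ j : Fin 2,
              ((-1 : ℝ) ^ (j : ℕ) * (1 - heaviside (t - x k j))) := by
          rw [(Fintype.prod_sum (κ := fun _ : Fin n => Fin 2)
              (fun k j => ((-1 : ℝ) ^ (j : ℕ)))),
            (Fintype.prod_sum (κ := fun _ : Fin n => Fin 2)
              (fun k j => ((-1 : ℝ) ^ (j : ℕ) * (1 - heaviside (t - x k j)))))]
      _ = -((-1 : ℝ) ^ n *
            ∏ k, (heaviside (t - x k 0) - heaviside (t - x k 1))) := by
          have h0 : (∑ j : Fin 2, (-1 : ℝ) ^ (j : ℕ)) = 0 := by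
            simp [Fin.sum_univ_two]
          rw [h0]
          rw [show (∏ _k : Fin n, (0:ℝ)) = 0 from
            Finset.prod_eq_zero (Finset.mem_univ ⟨0, hn⟩) rfl]
          have h1 : ∀ k ∈ (Finset.univ : Finset (Fin n)),
              (∑ j : Fin 2, ((-1 : ℝ) ^ (j : ℕ) * (1 - heaviside (t - x k j)))) =
              (-1 : ℝ) * (heaviside (t - x k 0) - heaviside (t - x k 1)) := by
            intro k _
            rw [Fin.sum_univ_two]
            norm_num
          rw [Finset.prod_congr rfl h1, Finset.prod_mul_distrib,
            Finset.prod_const, Finset.card_univ, Fintype.card_fin]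
          ring
  constructor
  · intro hev t
    rw [key t, hev.neg_one_pow, one_mul, neg_nonpos]
    exact Finset.prod_nonneg fun k _ => by
      have := heaviside_mono (show t - x k 1 ≤ t - x k 0 by linarith [hx k])
      linarith
  · intro hod t
    rw [key t, hod.neg_one_pow, neg_mul, one_mul, neg_neg]
    exact Finset.prod_nonneg fun k _ => by
      have := heaviside_mono (show t - x k 1 ≤ t - x k 0 by linarith [hx k])
      linarith
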